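/- Let p, q ≥ 1 be natural numbers with pq > 1, and t* = (π/4)^(1/q). For all complex λ and z with |λ| < t* and |z| < t*, we have |λ·(tan(z^q))^p| < |z| when z ≠ 0. -/

import Mathlib

open Real

-- B: sinh v * σ ≤ sinh σ * v for 0 ≤ v ≤ σ
lemma sinh_convex_bound {v σ : ℝ} (hv : 0 ≤ v) (hvσ : v ≤ σ) :
    Real.sinh v * σ ≤ Real.sinh σ * v := by
  rcases eq_or_lt_of_le (hv.trans hvσ) with h | hσ
  · have hv0 : v = 0 := le_antisymm (hvσ.trans h.symm.le) hv
    simp [← h, hv0]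
  have hconv : ConvexOn ℝ (Set.Ici 0) Real.sinh := by
    apply convexOn_of_deriv2_nonneg (convex_Ici 0)
    · fun_prop
    · fun_prop
    · rw [Real.deriv_sinh]; fun_prop
    · intro x hx
      rw [interior_Ici] at hx
      simp only [Function.iterate_succ, Function.iterate_zero, Function.comp_apply, id_eq,
        Real.deriv_sinh, Real.deriv_cosh]
      exact (Real.sinh_pos_iff.2 hx).le
  have h0 : (0:ℝ) ∈ Set.Ici (0:ℝ) := Set.self_mem_Ici
  have hσm : σ ∈ Set.Ici (0:ℝ) := Set.mem_Ici.2 (hv.trans hvσ)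
  have ha : (0:ℝ) ≤ 1 - v / σ := by
    rw [sub_nonneg]; exact div_le_one_of_le₀ hvσ hσ.le
  have hb : (0:ℝ) ≤ v / σ := div_nonneg hv hσ.le
  have := hconv.2 h0 hσm ha hb (by ring)
  simp only [smul_eq_mul, mul_zero, zero_add, Real.sinh_zero] at this
  have hvs : v / σ * σ = v := div_mul_cancel₀ v hσ.ne'
  rw [hvs] at this
  calc Real.sinh v * σ ≤ (v / σ * Real.sinh σ) * σ := by nlinarith
    _ = Real.sinh σ * v := by field_simp

-- C: sin σ * r ≤ sin r * σ for 0 ≤ r ≤ σ ≤ π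
lemma sin_concave_bound {r σ : ℝ} (hr : 0 ≤ r) (hrσ : r ≤ σ) (hσ : σ ≤ π) :
    Real.sin σ * r ≤ Real.sin r * σ := by
  rcases eq_or_lt_of_le (hr.trans hrσ) with h | hσ0
  · have : r = 0 := le_antisymm (hrσ.trans h.symm.le) hr
    simp [← h, this]
  have hconc := (strictConcaveOn_sin_Icc).concaveOn
  have h0 : (0:ℝ) ∈ Set.Icc 0 π := ⟨le_rfl, Real.pi_pos.le⟩
  have hσm : σ ∈ Set.Icc 0 π := ⟨hσ0.le, hσ⟩
  have ha : (0:ℝ) ≤ 1 - r / σ := by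
    rw [sub_nonneg]; exact div_le_one_of_le₀ hrσ hσ0.le
  have hb : (0:ℝ) ≤ r / σ := div_nonneg hr hσ0.le
  have := hconc.2 h0 hσm ha hb (by ring)
  simp only [smul_eq_mul, mul_zero, zero_add, Real.sin_zero] at this
  rw [div_mul_cancel₀ r hσ0.ne'] at this
  calc Real.sin σ * r = (r / σ * Real.sin σ) * σ := by field_simp
    _ ≤ Real.sin r * σ := by nlinarith

lemma E_nonneg {σ : ℝ} (h0 : 0 ≤ σ) (h1 : σ ≤ π / 2) :
    0 ≤ Real.sin σ * Real.sinh σ - Real.cos σ * (Real.cosh σ - 1) := by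
  have h : MonotoneOn (fun s : ℝ => Real.sin s * Real.sinh s - Real.cos s * (Real.cosh s - 1))
      (Set.Icc 0 (π/2)) := by
    apply monotoneOn_of_deriv_nonneg (convex_Icc 0 (π/2))
    · fun_prop
    · fun_prop
    · intro x hx
      rw [interior_Icc] at hx
      have hd : HasDerivAt (fun s : ℝ => Real.sin s * Real.sinh s - Real.cos s * (Real.cosh s - 1))
          (Real.cos x * Real.sinh x + Real.sin x * Real.cosh x -
            (-Real.sin x * (Real.cosh x - 1) + Real.cos x * Real.sinh x)) x := by
        exact ((Real.hasDerivAt_sin x).mul (Real.hasDerivAt_sinh x)).sub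
          ((Real.hasDerivAt_cos x).mul ((Real.hasDerivAt_cosh x).sub_const 1))
      rw [hd.deriv]
      have hs : 0 ≤ Real.sin x := Real.sin_nonneg_of_nonneg_of_le_pi hx.1.le
        (hx.2.le.trans (by linarith [Real.pi_pos]))
      nlinarith [Real.one_le_cosh x]
  have := h (Set.left_mem_Icc.2 (by positivity)) ⟨h0, h1⟩ h0
  simpa using this

lemma cos_sinh_le_sin {σ : ℝ} (h0 : 0 ≤ σ) (h1 : σ ≤ π / 2) :
    Real.cos σ * Real.sinh σ ≤ Real.sin σ := by
  have h : MonotoneOn (fun s : ℝ => Real.sin s - Real.cos s * Real.sinh s)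
      (Set.Icc 0 (π/2)) := by
    apply monotoneOn_of_deriv_nonneg (convex_Icc 0 (π/2))
    · fun_prop
    · fun_prop
    · intro x hx
      rw [interior_Icc] at hx
      have hd : HasDerivAt (fun s : ℝ => Real.sin s - Real.cos s * Real.sinh s)
          (Real.cos x - (-Real.sin x * Real.sinh x + Real.cos x * Real.cosh x)) x :=
        (Real.hasDerivAt_sin x).sub ((Real.hasDerivAt_cos x).mul (Real.hasDerivAt_sinh x))
      rw [hd.deriv]
      have := E_nonneg hx.1.le hx.2.le
      linarith [this]
  have := h (Set.left_mem_Icc.2 (by positivity)) ⟨h0, h1⟩ h0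
  simp only [Real.sin_zero, Real.cos_zero, Real.sinh_zero, mul_zero, sub_zero, one_mul] at this
  linarith

lemma key_ineq {v σ : ℝ} (hv : 0 ≤ v) (hvσ : v ≤ σ) (hσ : σ ≤ π / 2) :
    Real.cos σ * Real.cosh v ≤ Real.cos (Real.sqrt (σ^2 - v^2)) := by
  have hσ0 : 0 ≤ σ := hv.trans hvσ
  have hσπ : σ ≤ π := hσ.trans (by linarith [Real.pi_pos])
  have hasD : ∀ x ∈ Set.Ioo (0:ℝ) σ,
      HasDerivAt (fun v : ℝ => Real.cos (Real.sqrt (σ^2 - v^2)) - Real.cos σ * Real.cosh v)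
        (-Real.sin (Real.sqrt (σ^2 - x^2)) * (1/(2*Real.sqrt (σ^2 - x^2)) * (0 - 2*x^1))
          - Real.cos σ * Real.sinh x) x := by
    intro x hx
    have hr2 : 0 < σ^2 - x^2 := by nlinarith [hx.1, hx.2]
    have h3 : HasDerivAt (fun v : ℝ => Real.sqrt (σ^2 - v^2))
        (1/(2*Real.sqrt (σ^2 - x^2)) * (0 - 2*x^1)) x :=
      (Real.hasDerivAt_sqrt hr2.ne').comp x
        ((hasDerivAt_const x (σ^2)).sub (hasDerivAt_pow 2 x))
    exact ((Real.hasDerivAt_cos _).comp x h3).sub ((Real.hasDerivAt_cosh x).const_mul (Real.cos σ))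
  have hmono : MonotoneOn (fun v : ℝ => Real.cos (Real.sqrt (σ^2 - v^2)) - Real.cos σ * Real.cosh v)
      (Set.Icc 0 σ) := by
    apply monotoneOn_of_deriv_nonneg (convex_Icc 0 σ)
    · apply ContinuousOn.sub
      · exact (Real.continuous_cos.comp (Real.continuous_sqrt.comp (by continuity))).continuousOn
      · fun_prop
    · intro x hx
      rw [interior_Icc] at hx
      exact ((hasD x hx).differentiableAt).differentiableWithinAt
    · intro x hx
      rw [interior_Icc] at hx
      obtain ⟨hx0, hxσ⟩ := hx
      rw [(hasD x ⟨hx0, hxσ⟩).deriv]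
      have hr2 : 0 < σ^2 - x^2 := by nlinarith
      set r := Real.sqrt (σ^2 - x^2) with hrdef
      have hrpos : 0 < r := Real.sqrt_pos.2 hr2
      have hrσ : r ≤ σ := by
        rw [hrdef]
        calc Real.sqrt (σ^2 - x^2) ≤ Real.sqrt (σ^2) := Real.sqrt_le_sqrt (by nlinarith)
          _ = σ := Real.sqrt_sq hσ0
      have hC := sin_concave_bound hrpos.le hrσ hσπ
      have hB := sinh_convex_bound hx0.le (hxσ.le)
      have hD := cos_sinh_le_sin hσ0 hσ
      have hcos : 0 ≤ Real.cos σ := Real.cos_nonneg_of_mem_Icc ⟨by linarith, hσ⟩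
      have hσpos : 0 < σ := hx0.trans hxσ
      have e1 : -Real.sin r * (1/(2*r) * (0 - 2*x^1)) = Real.sin r * x / r := by
        field_simp; ring
      rw [e1]
      have step1 : Real.sin σ * x / σ ≤ Real.sin r * x / r := by
        rw [div_le_div_iff₀ hσpos hrpos]
        calc Real.sin σ * x * r = (Real.sin σ * r) * x := by ring
          _ ≤ (Real.sin r * σ) * x := by nlinarith
          _ = Real.sin r * x * σ := by ring
      have step2 : Real.cos σ * Real.sinh x ≤ Real.sin σ * x / σ := by
        rw [le_div_iff₀ hσpos]
        calc Real.cos σ * Real.sinh x * σ = Real.cos σ * (Real.sinh x * σ) := by ring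
          _ ≤ Real.cos σ * (Real.sinh σ * x) := by nlinarith
          _ = (Real.cos σ * Real.sinh σ) * x := by ring
          _ ≤ Real.sin σ * x := by nlinarith
      linarith
  have := hmono (Set.left_mem_Icc.2 hσ0) ⟨hv, hvσ⟩ hv
  simp only [ne_eq, OfNat.ofNat_ne_zero, not_false_eq_true, zero_pow, sub_zero,
    Real.sqrt_sq hσ0, Real.cosh_zero, mul_one] at this
  linarith

lemma aux_main {sinx cosx sinhy sins coss : ℝ}
    (hk : (2*coss^2 - 1) * ((sinhy^2+1) + sinhy^2) ≤ 2*cosx^2 - 1)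
    (p1 : sins^2 + coss^2 = 1) (p2 : sinx^2 + cosx^2 = 1) :
    (sinx^2 + sinhy^2) * coss^2 ≤ sins^2 * (cosx^2 + sinhy^2) := by nlinarith

set_option maxHeartbeats 1000000 in
lemma abs_tan_le {w : ℂ} (hw : ‖w‖ ≤ π / 4) :
    ‖Complex.tan w‖ ≤ Real.tan ‖w‖ := by
  set x := w.re
  set y := w.im
  set s := ‖w‖ with hs
  have hs0 : 0 ≤ s := norm_nonneg w
  have hxy : x^2 + y^2 = s^2 := by
    rw [hs, Complex.sq_norm, Complex.normSq_apply]; ring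
  have hxs : |x| ≤ s := Complex.abs_re_le_norm w
  have hys : |y| ≤ s := Complex.abs_im_le_norm w
  have hsin : ‖Complex.sin w‖^2 = Real.sin x ^2 + Real.sinh y ^2 := by
    rw [Complex.sin_eq]
    rw [show Complex.sin x = (Real.sin x : ℂ) from (Complex.ofReal_sin x).symm,
        show Complex.cos x = (Real.cos x : ℂ) from (Complex.ofReal_cos x).symm,
        show Complex.sinh y = (Real.sinh y : ℂ) from (Complex.ofReal_sinh y).symm,
        show Complex.cosh y = (Real.cosh y : ℂ) from (Complex.ofReal_cosh y).symm]
    rw [← Complex.ofReal_mul, ← Complex.ofReal_mul, Complex.sq_norm, Complex.normSq_add_mul_I]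
    have h1 := Real.sin_sq_add_cos_sq x
    have h2 := Real.cosh_sq y
    nlinarith
  have hcos : ‖Complex.cos w‖^2 = Real.cos x ^2 + Real.sinh y ^2 := by
    rw [Complex.cos_eq]
    rw [show Complex.sin x = (Real.sin x : ℂ) from (Complex.ofReal_sin x).symm,
        show Complex.cos x = (Real.cos x : ℂ) from (Complex.ofReal_cos x).symm,
        show Complex.sinh y = (Real.sinh y : ℂ) from (Complex.ofReal_sinh y).symm,
        show Complex.cosh y = (Real.cosh y : ℂ) from (Complex.ofReal_cosh y).symm]
    rw [← Complex.ofReal_mul, ← Complex.ofReal_mul, sub_eq_add_neg, ← neg_mul,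
      ← Complex.ofReal_neg, Complex.sq_norm, Complex.normSq_add_mul_I]
    have h1 := Real.sin_sq_add_cos_sq x
    have h2 := Real.cosh_sq y
    nlinarith
  -- key inequality in doubled variables
  have hkey : Real.cos (2*s) * Real.cosh (2*y) ≤ Real.cos (2*x) := by
    have h1 : (2*|y|) ≤ 2*s := by linarith [hys]
    have h2 : 2*s ≤ π/2 := by linarith
    have h3 : (0:ℝ) ≤ 2*|y| := by positivity
    have := key_ineq h3 h1 h2
    have e : Real.sqrt ((2*s)^2 - (2*|y|)^2) = |2*x| := by
      rw [show (2*s)^2 - (2*|y|)^2 = |2*x|^2 by rw [sq_abs]; nlinarith [sq_abs y]]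
      exact Real.sqrt_sq (abs_nonneg _)
    rw [e, Real.cos_abs] at this
    calc Real.cos (2*s) * Real.cosh (2*y) = Real.cos (2*s) * Real.cosh (2*|y|) := by
          rw [show (2:ℝ)*|y| = |2*y| by rw [abs_mul]; norm_num, Real.cosh_abs]
      _ ≤ Real.cos (2*x) := this
  have hcoss : 0 < Real.cos s := Real.cos_pos_of_mem_Ioo
    ⟨by linarith [Real.pi_pos], by linarith [Real.pi_pos]⟩
  have hcosx : 0 < Real.cos x := Real.cos_pos_of_mem_Ioo
    ⟨by cases' abs_le.1 hxs with h _; linarith [Real.pi_pos], by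
      have := (abs_le.1 hxs).2; linarith [Real.pi_pos]⟩
  have hcosw : 0 < ‖Complex.cos w‖ := by
    have : (0:ℝ) < Real.cos x ^2 + Real.sinh y ^2 := by positivity
    rw [← hcos] at this
    nlinarith [norm_nonneg (Complex.cos w)]
  -- main square inequality
  have hmain : ‖Complex.sin w‖^2 ≤ Real.tan s ^2 * ‖Complex.cos w‖^2 := by
    rw [hsin, hcos, Real.tan_eq_sin_div_cos, div_pow]
    rw [div_mul_eq_mul_div, le_div_iff₀ (by positivity)]
    have hk : (2*Real.cos s^2 - 1) * (Real.cosh y^2 + Real.sinh y^2) ≤ 2*Real.cos x^2 - 1 := by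
      have e1 : Real.cos (2*s) = 2*Real.cos s^2 - 1 := Real.cos_two_mul s
      have e2 : Real.cos (2*x) = 2*Real.cos x^2 - 1 := Real.cos_two_mul x
      have e3 : Real.cosh (2*y) = Real.cosh y^2 + Real.sinh y^2 := Real.cosh_two_mul y
      rw [e1, e2, e3] at hkey
      exact hkey
    rw [Real.cosh_sq y] at hk
    exact aux_main hk (Real.sin_sq_add_cos_sq s) (Real.sin_sq_add_cos_sq x)
  have htans : 0 ≤ Real.tan s := Real.tan_nonneg_of_nonneg_of_le_pi_div_two hs0 (by linarith [Real.pi_pos])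
  have habs : ‖Complex.tan w‖ = ‖Complex.sin w‖ / ‖Complex.cos w‖ := by
    rw [Complex.tan_eq_sin_div_cos, norm_div]
  rw [habs, div_le_iff₀ hcosw]
  nlinarith [hmain, mul_nonneg htans hcosw.le, norm_nonneg (Complex.sin w)]

lemma tan_le_four_div_pi_mul {s : ℝ} (h0 : 0 ≤ s) (h1 : s ≤ π/4) :
    Real.tan s ≤ 4/π * s := by
  have hπ : 0 < π := Real.pi_pos
  set f : ℝ → ℝ := fun x => 4*x*Real.cos x - π * Real.sin x with hf
  have hder : ∀ x : ℝ, HasDerivAt f (4*Real.cos x - 4*x*Real.sin x - π * Real.cos x) x := by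
    intro x
    have h1' : HasDerivAt (fun x : ℝ => 4*x*Real.cos x)
        (4 * Real.cos x + 4*x*(-Real.sin x)) x := by
      have := ((hasDerivAt_id' x).const_mul (4:ℝ)).mul (Real.hasDerivAt_cos x)
      exact this.congr_deriv (by ring)
    have h2' := (Real.hasDerivAt_sin x).const_mul π
    have := h1'.sub h2'
    exact this.congr_deriv (by ring)
  have hderiv_eq : deriv f = fun x => 4*Real.cos x - 4*x*Real.sin x - π * Real.cos x :=
    funext fun x => (hder x).deriv
  have hder2 : ∀ x : ℝ, HasDerivAt (deriv f) ((π-8) * Real.sin x - 4*x*Real.cos x) x := by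
    intro x
    rw [hderiv_eq]
    have h1' := (Real.hasDerivAt_cos x).const_mul (4:ℝ)
    have h2' : HasDerivAt (fun x : ℝ => 4*x*Real.sin x)
        (4 * Real.sin x + 4*x*(Real.cos x)) x := by
      have := ((hasDerivAt_id' x).const_mul (4:ℝ)).mul (Real.hasDerivAt_sin x)
      exact this.congr_deriv (by ring)
    have h3' := (Real.hasDerivAt_cos x).const_mul π
    have := (h1'.sub h2').sub h3'
    exact this.congr_deriv (by ring)
  have hconc : ConcaveOn ℝ (Set.Icc 0 (π/4)) f := by
    apply concaveOn_of_deriv2_nonpos (convex_Icc 0 (π/4))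
    · fun_prop
    · intro x _; exact (hder x).differentiableAt.differentiableWithinAt
    · intro x _; exact (hder2 x).differentiableAt.differentiableWithinAt
    · intro x hx
      rw [interior_Icc] at hx
      obtain ⟨hxa, hxb⟩ := hx
      have : deriv^[2] f x = (π-8) * Real.sin x - 4*x*Real.cos x := by
        simp only [Function.iterate_succ, Function.iterate_zero, Function.comp_apply, id_eq]
        exact (hder2 x).deriv
      rw [this]
      have hsx : 0 ≤ Real.sin x := Real.sin_nonneg_of_nonneg_of_le_pi hxa.le
        (by linarith)
      have hcx : 0 ≤ Real.cos x := Real.cos_nonneg_of_mem_Icc ⟨by linarith, by linarith⟩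
      have hπ8 : π ≤ 8 := by linarith [Real.pi_le_four]
      nlinarith [mul_nonneg hxa.le hcx, mul_nonneg hsx (by linarith : (0:ℝ) ≤ 8 - π)]
  have hf0 : f 0 = 0 := by simp [hf]
  have hfπ4 : f (π/4) = 0 := by
    simp only [hf, Real.cos_pi_div_four, Real.sin_pi_div_four]
    ring
  have hfs : 0 ≤ f s := by
    have ha : (0:ℝ) ≤ 1 - 4*s/π := by
      rw [sub_nonneg, div_le_one hπ]; linarith
    have hb : (0:ℝ) ≤ 4*s/π := by positivity
    have := hconc.2 (Set.left_mem_Icc.2 (by positivity)) (Set.right_mem_Icc.2 (by positivity))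
      ha hb (by ring)
    simp only [smul_eq_mul, mul_zero, zero_add, hf0, hfπ4] at this
    have e : 4*s/π * (π/4) = s := by field_simp
    rw [e] at this
    linarith
  have hcoss : 0 < Real.cos s := Real.cos_pos_of_mem_Ioo ⟨by linarith, by linarith⟩
  rw [Real.tan_eq_sin_div_cos, div_le_iff₀ hcoss]
  simp only [hf] at hfs
  have : Real.sin s ≤ 4/π * s * Real.cos s := by
    rw [div_mul_eq_mul_div, div_mul_eq_mul_div, le_div_iff₀ hπ]
    nlinarith
  linarith

theorem abs_f_lt_abs (p q : ℕ) (hp : 1 ≤ p) (hq : 1 ≤ q) (hpq : 1 < p * q)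
    (lam z : ℂ)
    (hlam : ‖lam‖ < (π / 4) ^ ((1 : ℝ) / q))
    (hz : ‖z‖ < (π / 4) ^ ((1 : ℝ) / q))
    (hz0 : z ≠ 0) :
    ‖lam * (Complex.tan (z ^ q)) ^ p‖ < ‖z‖ := by
  have hπ : 0 < π := Real.pi_pos
  set T : ℝ := (π / 4) ^ ((1 : ℝ) / q) with hT
  have hT0 : 0 < T := Real.rpow_pos_of_pos (by positivity) _
  set r : ℝ := ‖z‖ with hr
  have hr0 : 0 < r := by
    rw [hr]; exact norm_pos_iff.mpr hz0
  have hq0 : (q:ℝ) ≠ 0 := by positivity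
  have hTq : T ^ q = π / 4 := by
    rw [hT, ← Real.rpow_natCast ((π/4) ^ ((1:ℝ)/q)) q, ← Real.rpow_mul (by positivity)]
    rw [one_div, inv_mul_cancel₀ hq0, Real.rpow_one]
  have hsq : r ^ q < π / 4 := by
    rw [← hTq]
    exact pow_lt_pow_left₀ hz hr0.le (by omega)
  have hAle : ‖Complex.tan (z ^ q)‖ ≤ 4 / π * r ^ q := by
    have habsw : ‖z ^ q‖ = r ^ q := by rw [norm_pow, hr]
    have h1 := abs_tan_le (w := z ^ q) (by rw [habsw]; exact hsq.le)
    rw [habsw] at h1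
    exact h1.trans (tan_le_four_div_pi_mul (by positivity) hsq.le)
  have hBpos : (0:ℝ) < 4 / π * r ^ q := by positivity
  have hlast : T * (4 / π * r ^ q) ^ p ≤ r := by
    have e1 : (4:ℝ) / π * r ^ q = r ^ q / T ^ q := by
      rw [hTq]; field_simp
    rw [e1, div_pow, ← pow_mul, ← pow_mul]
    rw [mul_comm T _, div_mul_eq_mul_div, div_le_iff₀ (by positivity)]
    obtain ⟨m, hm⟩ : ∃ m, q * p = m + 1 := ⟨q * p - 1, by have := Nat.mul_le_mul hq hp; omega⟩
    rw [hm, pow_succ, pow_succ]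
    have : r ^ m ≤ T ^ m := pow_le_pow_left₀ hr0.le hz.le m
    nlinarith [mul_le_mul_of_nonneg_right this (mul_nonneg hr0.le hT0.le)]
  calc ‖lam * (Complex.tan (z ^ q)) ^ p‖
      = ‖lam‖ * (‖Complex.tan (z ^ q)‖) ^ p := by
        rw [norm_mul, norm_pow]
    _ ≤ ‖lam‖ * (4 / π * r ^ q) ^ p := by
        apply mul_le_mul_of_nonneg_left _ (norm_nonneg lam)
        exact pow_le_pow_left₀ (norm_nonneg _) hAle p
    _ < T * (4 / π * r ^ q) ^ p := by
        apply mul_lt_mul_of_pos_right hlam (by positivity)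
    _ ≤ r := hlast
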